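/- Let σ > 0, x > 0 and y > 0. Then there exists a unique real number z with 0 < z < 1/σ such that z · exp(-σ z) = x · exp(-σ (x + y)). -/

import Mathlib

/-- For `σ > 0`, `x > 0`, `y > 0`, there is a unique `z ∈ (0, 1/σ)` with
`z e^{-σ z} = x e^{-σ (x + y)}`. -/
theorem xinf_exists_unique (σ x y : ℝ) (hσ : 0 < σ) (hx : 0 < x) (hy : 0 < y) :
    ∃! z : ℝ, z ∈ Set.Ioo 0 (1 / σ) ∧
      z * Real.exp (-σ * z) = x * Real.exp (-σ * (x + y)) := by
  set f : ℝ → ℝ := fun z => z * Real.exp (-σ * z) with hf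
  have hcont : Continuous f := by fun_prop
  -- strict monotonicity on [0, 1/σ]
  have hmono : StrictMonoOn f (Set.Icc 0 (1 / σ)) := by
    apply strictMonoOn_of_deriv_pos (convex_Icc _ _) hcont.continuousOn
    intro z hz
    rw [interior_Icc] at hz
    have h1 : HasDerivAt (fun z : ℝ => -σ * z) (-σ) z := by
      simpa using (hasDerivAt_id z).const_mul (-σ)
    have h2 := h1.exp
    have h3 : HasDerivAt f (1 * Real.exp (-σ * z) + z * (Real.exp (-σ * z) * -σ)) z :=
      (hasDerivAt_id z).mul h2
    rw [h3.deriv]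
    have hzσ : σ * z < 1 := by
      have := hz.2
      rw [lt_div_iff₀ hσ] at this
      nlinarith
    have hexp : 0 < Real.exp (-σ * z) := Real.exp_pos _
    nlinarith
  -- bounds on the constant
  set c := x * Real.exp (-σ * (x + y)) with hc
  have hc0 : 0 < c := by positivity
  have hf0 : f 0 = 0 := by simp [hf]
  have hftop : f (1 / σ) = (1 / σ) * Real.exp (-1) := by
    rw [hf]
    field_simp
  have hctop : c < f (1 / σ) := by
    rw [hftop]
    have key : x * Real.exp (-σ * x) ≤ (1 / σ) * Real.exp (-1) := by
      have h := Real.add_one_le_exp (σ * x - 1)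
      have h' : σ * x ≤ Real.exp (σ * x - 1) := by linarith
      have hex : Real.exp (σ * x - 1) = Real.exp (σ * x) * Real.exp (-1) := by
        rw [← Real.exp_add]; ring_nf
      rw [hex] at h'
      have hpos : 0 < Real.exp (-σ * x) := Real.exp_pos _
      have := mul_le_mul_of_nonneg_right h' hpos.le
      calc x * Real.exp (-σ * x) = (σ * x) * Real.exp (-σ * x) / σ := by
            field_simp
        _ ≤ Real.exp (σ * x) * Real.exp (-1) * Real.exp (-σ * x) / σ := by
            apply div_le_div_of_nonneg_right _ hσ.le
            exact this
        _ = (1 / σ) * Real.exp (-1) := by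
            rw [mul_comm (Real.exp (σ * x)) (Real.exp (-1)), mul_assoc, ← Real.exp_add]
            field_simp
            norm_num
    have hsplit : c = (x * Real.exp (-σ * x)) * Real.exp (-σ * y) := by
      rw [hc, mul_assoc, ← Real.exp_add]; ring_nf
    have hey : Real.exp (-σ * y) < 1 := by
      rw [Real.exp_lt_one_iff]; nlinarith
    have hxpos : 0 < x * Real.exp (-σ * x) := by positivity
    calc c = (x * Real.exp (-σ * x)) * Real.exp (-σ * y) := hsplit
      _ < (x * Real.exp (-σ * x)) * 1 := by
          exact mul_lt_mul_of_pos_left hey hxpos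
      _ = x * Real.exp (-σ * x) := by ring
      _ ≤ (1 / σ) * Real.exp (-1) := key
  -- existence via IVT
  have hle : (0 : ℝ) ≤ 1 / σ := by positivity
  have hivt := intermediate_value_Ioo hle hcont.continuousOn
  have hcmem : c ∈ Set.Ioo (f 0) (f (1 / σ)) := ⟨by rw [hf0]; exact hc0, hctop⟩
  obtain ⟨z, hzmem, hzeq⟩ := hivt hcmem
  refine ⟨z, ⟨hzmem, hzeq⟩, ?_⟩
  rintro w ⟨hwmem, hweq⟩
  have hIoo : Set.Ioo (0 : ℝ) (1 / σ) ⊆ Set.Icc 0 (1 / σ) := Set.Ioo_subset_Icc_self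
  exact hmono.injOn (hIoo hwmem) (hIoo hzmem) (by show f w = f z; simp only [hf]; rw [hweq]; exact hzeq.symm)
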